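/- There exist a constant C > 0 and an exponent k ∈ ℕ such that for every ε > 0 and M > 0 there exist a real 4 × 2 matrix W₁, a vector b₁ ∈ ℝ⁴, and a vector w₂ ∈ ℝ⁴, all of whose entries are bounded in absolute value by C·(M + 1/ε)^k, such that the two-layer GeLU network f(a, b) = Σ_{k'=1}^{4} (w₂)_{k'} · GeLU( (W₁·(a, b) + b₁)_{k'} ) satisfies |f(a, b) − a·b| ≤ ε for all a, b ∈ [−M, M]. -/

import Mathlib

open ProbabilityTheory

/-- The cumulative distribution function of the standard Gaussian measure on ℝ. -/
noncomputable def stdGaussianCDF (x : ℝ) : ℝ := cdf (gaussianReal 0 1) x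

/-- The GeLU activation function. -/
noncomputable def gelu (x : ℝ) : ℝ := x * stdGaussianCDF x

open MeasureTheory Real

lemma pdf_eq (t : ℝ) : gaussianPDFReal 0 1 t = (√(2*π))⁻¹ * rexp (-t^2/2) := by
  simp [gaussianPDFReal]

lemma stdGaussianCDF_eq (x : ℝ) :
    stdGaussianCDF x = ∫ t in Set.Iic x, gaussianPDFReal 0 1 t := by
  rw [stdGaussianCDF, cdf_eq_real, measureReal_def, gaussianReal_apply_eq_integral 0 one_ne_zero,
    ENNReal.toReal_ofReal
      (setIntegral_nonneg measurableSet_Iic fun t _ => gaussianPDFReal_nonneg 0 1 t)]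

lemma stdGaussianCDF_sub (x y : ℝ) :
    stdGaussianCDF x - stdGaussianCDF y = ∫ t in y..x, gaussianPDFReal 0 1 t := by
  rw [stdGaussianCDF_eq, stdGaussianCDF_eq,
    ← intervalIntegral.integral_Iic_sub_Iic (integrable_gaussianPDFReal 0 1).integrableOn
      (integrable_gaussianPDFReal 0 1).integrableOn]

lemma gelu_add_neg (x : ℝ) :
    gelu x + gelu (-x) = x * ∫ t in (-x)..x, gaussianPDFReal 0 1 t := by
  rw [← stdGaussianCDF_sub]
  simp [gelu]
  ring

lemma abs_pdf_sub_le (t : ℝ) :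
    ‖gaussianPDFReal 0 1 t - (√(2*π))⁻¹‖ ≤ (√(2*π))⁻¹/2 * t^2 := by
  have hc : (0:ℝ) < (√(2*π))⁻¹ := by positivity
  rw [pdf_eq]
  have h1 : rexp (-t^2/2) ≤ 1 := by
    rw [Real.exp_le_one_iff]; nlinarith [sq_nonneg t]
  have h2 : 1 - t^2/2 ≤ rexp (-t^2/2) := by
    have := Real.add_one_le_exp (-(t^2/2))
    have : -t^2/2 = -(t^2/2) := by ring
    rw [this]; linarith [Real.add_one_le_exp (-(t^2/2))]
  rw [Real.norm_eq_abs, abs_le]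
  constructor <;> nlinarith

lemma key_estimate_nonneg (x : ℝ) (hx : 0 ≤ x) :
    |x * (∫ t in (-x)..x, gaussianPDFReal 0 1 t) - 2*(√(2*π))⁻¹*x^2|
      ≤ (√(2*π))⁻¹/3 * x^4 := by
  set c : ℝ := (√(2*π))⁻¹ with hcdef
  have hc : (0:ℝ) < c := by positivity
  have hint : IntervalIntegrable (gaussianPDFReal 0 1) volume (-x) x :=
    (integrable_gaussianPDFReal 0 1).intervalIntegrable
  have hconst : ∫ t in (-x)..x, c = 2*c*x := by
    rw [intervalIntegral.integral_const]; simp; ring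
  have hsub : (∫ t in (-x)..x, gaussianPDFReal 0 1 t) - 2*c*x
      = ∫ t in (-x)..x, (gaussianPDFReal 0 1 t - c) := by
    rw [intervalIntegral.integral_sub hint intervalIntegrable_const, hconst]
  have hb : |∫ t in (-x)..x, (gaussianPDFReal 0 1 t - c)| ≤ c/3 * x^3 := by
    have hle : (-x) ≤ x := by linarith
    calc |∫ t in (-x)..x, (gaussianPDFReal 0 1 t - c)|
        = ‖∫ t in (-x)..x, (gaussianPDFReal 0 1 t - c)‖ := (Real.norm_eq_abs _).symm
      _ ≤ ∫ t in (-x)..x, ‖gaussianPDFReal 0 1 t - c‖ :=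
          intervalIntegral.norm_integral_le_integral_norm hle
      _ ≤ ∫ t in (-x)..x, c/2 * t^2 := by
          apply intervalIntegral.integral_mono_on hle
            ((hint.sub intervalIntegrable_const).norm)
            (((continuous_const.mul (continuous_pow 2)) :
              Continuous fun t : ℝ => c/2 * t^2).intervalIntegrable _ _)
          intro t _
          exact abs_pdf_sub_le t
      _ = c/3 * x^3 := by
          rw [intervalIntegral.integral_const_mul, integral_pow]
          ring
  calc |x * (∫ t in (-x)..x, gaussianPDFReal 0 1 t) - 2*c*x^2|
      = |x| * |(∫ t in (-x)..x, gaussianPDFReal 0 1 t) - 2*c*x| := by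
        rw [← abs_mul]; ring_nf
    _ ≤ x * (c/3 * x^3) := by
        rw [hsub, abs_of_nonneg hx]
        exact mul_le_mul_of_nonneg_left hb hx
    _ = c/3 * x^4 := by ring

lemma key_estimate (x : ℝ) :
    |gelu x + gelu (-x) - 2*(√(2*π))⁻¹*x^2| ≤ (√(2*π))⁻¹/3 * x^4 := by
  rcases le_or_gt 0 x with hx | hx
  · rw [gelu_add_neg]; exact key_estimate_nonneg x hx
  · have h := key_estimate_nonneg (-x) (by linarith)
    rw [gelu_add_neg]
    have h1 : (-x) * ∫ t in -(-x)..(-x), gaussianPDFReal 0 1 t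
        = x * ∫ t in (-x)..x, gaussianPDFReal 0 1 t := by
      rw [neg_neg, intervalIntegral.integral_symm]; ring
    rw [h1] at h
    have h2 : (-x)^2 = x^2 := by ring
    have h3 : (-x)^4 = x^4 := by ring
    rw [h2, h3] at h
    exact h

lemma net_eval (h w a b : ℝ) :
    (∑ k', (![w,w,-w,-w] : Fin 4 → ℝ) k' *
      gelu (((!![h,h;-h,-h;h,-h;-h,h] : Matrix (Fin 4) (Fin 2) ℝ).mulVec ![a,b] + 0) k'))
    = w * (gelu (h*(a+b)) + gelu (-(h*(a+b)))) - w * (gelu (h*(a-b)) + gelu (-(h*(a-b)))) := by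
  have e : (!![h,h;-h,-h;h,-h;-h,h] : Matrix (Fin 4) (Fin 2) ℝ).mulVec ![a,b] + 0
      = ![h*(a+b), -(h*(a+b)), h*(a-b), -(h*(a-b))] := by
    funext i
    fin_cases i <;>
      simp [Matrix.mulVec, dotProduct, Fin.sum_univ_two] <;> ring
  rw [e]
  simp [Fin.sum_univ_four]
  ring

/-- A two-layer GeLU MLP with hidden dimension 4 and parameters polynomially
bounded in M and 1/ε approximates the product function on [−M, M]². -/
theorem gelu_mlp_approx_product :
    ∃ C > (0 : ℝ), ∃ k : ℕ, ∀ ε > (0 : ℝ), ∀ M > (0 : ℝ),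
      ∃ (W₁ : Matrix (Fin 4) (Fin 2) ℝ) (b₁ : Fin 4 → ℝ) (w₂ : Fin 4 → ℝ),
        (∀ k' j, |W₁ k' j| ≤ C * (M + 1 / ε) ^ k) ∧
        (∀ k', |b₁ k'| ≤ C * (M + 1 / ε) ^ k) ∧
        (∀ k', |w₂ k'| ≤ C * (M + 1 / ε) ^ k) ∧
        ∀ a b : ℝ, a ∈ Set.Icc (-M) M → b ∈ Set.Icc (-M) M →
          |(∑ k', w₂ k' * gelu ((W₁.mulVec ![a, b] + b₁) k')) - a * b| ≤ ε := by
  refine ⟨1, one_pos, 5, ?_⟩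
  intro ε hε M hM
  have hQpos : (0:ℝ) < M + 1/ε := by positivity
  by_cases hcase : M^2 ≤ ε
  · -- zero network suffices
    refine ⟨0, 0, 0, ?_, ?_, ?_, ?_⟩
    · intro k' j; simp; positivity
    · intro k'; simp; positivity
    · intro k'; simp; positivity
    · intro a b ha hb
      simp only [Pi.zero_apply, zero_mul, Finset.sum_const_zero, zero_sub, abs_neg, abs_mul]
      have ha' : |a| ≤ M := abs_le.mpr ⟨ha.1, ha.2⟩
      have hb' : |b| ≤ M := abs_le.mpr ⟨hb.1, hb.2⟩
      calc |a| * |b| ≤ M * M := mul_le_mul ha' hb' (abs_nonneg b) hM.le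
        _ = M^2 := by ring
        _ ≤ ε := hcase
  · push_neg at hcase  -- ε < M^2
    set c : ℝ := (√(2*π))⁻¹ with hcdef
    have hcpos : (0:ℝ) < c := by positivity
    have hsqrt_ne : √(2*π) ≠ 0 := by positivity
    set h : ℝ := √(3*ε) / (2*M^2) with hhdef
    have hhpos : 0 < h := by positivity
    set w : ℝ := √(2*π)*M^4/(6*ε) with hwdef
    have hwpos : 0 < w := by positivity
    have hh2' : 4*M^4*h^2 = 3*ε := by
      rw [hhdef, div_pow, Real.sq_sqrt (by positivity)]
      field_simp
      ring
    have hcwh : c*w*h^2 = 1/8 := by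
      rw [hcdef, hwdef]
      field_simp
      linarith [hh2']
    -- bounds on parameters
    have hQ1 : 1 ≤ M + 1/ε := by
      rcases le_or_gt 1 M with hM1 | hM1
      · have : 0 < 1/ε := by positivity
        linarith
      · have : 1 ≤ 1/ε := by
          rw [le_div_iff₀ hε]; nlinarith
        linarith
    have hhQ : h ≤ M + 1/ε := by
      have hs : √(3*ε) ≤ 2*M := by
        rw [show (2*M) = √((2*M)^2) by rw [Real.sqrt_sq (by positivity)]]
        apply Real.sqrt_le_sqrt; nlinarith
      have h1 : h ≤ 1/M := by
        rw [hhdef]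
        rw [div_le_div_iff₀ (by positivity) hM]
        nlinarith
      rcases le_or_gt 1 M with hM1 | hM1
      · have : 1/M ≤ 1 := by rw [div_le_one hM]; linarith
        have : 0 < 1/ε := by positivity
        linarith
      · have : 1/M ≤ 1/ε := by
          rw [div_le_div_iff₀ hM hε]; nlinarith
        linarith
    have hwQ : w ≤ (M + 1/ε)^5 := by
      have hsl : √(2*π) ≤ 3 := by
        rw [show (3:ℝ) = √(3^2) by rw [Real.sqrt_sq (by norm_num)]]
        apply Real.sqrt_le_sqrt; nlinarith [Real.pi_le_four]
      have h1 : w ≤ M^4 * (1/ε) := by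
        rw [hwdef]
        rw [div_le_iff₀ (by positivity)]
        have : M^4 * (1/ε) * (6*ε) = 6 * M^4 := by field_simp
        rw [this]
        nlinarith [pow_pos hM 4]
      have hMle : M ≤ M + 1/ε := by
        have : 0 < 1/ε := by positivity
        linarith
      have h2 : M^4 * (1/ε) ≤ (M + 1/ε)^4 * (M + 1/ε) := by
        apply mul_le_mul (pow_le_pow_left₀ hM.le hMle 4) (by linarith)
          (by positivity) (by positivity)
      calc w ≤ M^4 * (1/ε) := h1
        _ ≤ (M + 1/ε)^4 * (M + 1/ε) := h2
        _ = (M + 1/ε)^5 := by ring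
    have hQ5 : M + 1/ε ≤ (M + 1/ε)^5 := by
      calc M + 1/ε = (M + 1/ε)^1 := (pow_one _).symm
        _ ≤ (M + 1/ε)^5 := pow_le_pow_right₀ hQ1 (by norm_num)
    clear_value h w c
    refine ⟨!![h,h;-h,-h;h,-h;-h,h], 0, ![w,w,-w,-w], ?_, ?_, ?_, ?_⟩
    · intro k' j
      rw [one_mul]
      fin_cases k' <;> fin_cases j <;> simp [abs_of_pos hhpos] <;>
        simpa using hhQ.trans hQ5
    · intro k'; rw [one_mul]; simp; positivity
    · intro k'
      rw [one_mul]
      fin_cases k' <;> simp [abs_of_pos hwpos] <;> simpa using hwQ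
    · intro a b ha hb
      rw [net_eval]
      have key1 := key_estimate (h*(a+b))
      have key2 := key_estimate (h*(a-b))
      rw [← hcdef] at key1 key2
      set D1 : ℝ := gelu (h*(a+b)) + gelu (-(h*(a+b))) - 2*c*(h*(a+b))^2 with hD1
      set D2 : ℝ := gelu (h*(a-b)) + gelu (-(h*(a-b))) - 2*c*(h*(a-b))^2 with hD2
      clear_value D1 D2
      have hcancel : 2*c*w*(h*(a+b))^2 - 2*c*w*(h*(a-b))^2 = a*b := by
        linear_combination (8*a*b) * hcwh
      have hrw : w * (gelu (h*(a+b)) + gelu (-(h*(a+b))))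
          - w * (gelu (h*(a-b)) + gelu (-(h*(a-b)))) - a*b
          = w * D1 - w * D2 := by
        rw [hD1, hD2]; linear_combination hcancel
      rw [hrw]
      have ha' : |a| ≤ M := abs_le.mpr ⟨ha.1, ha.2⟩
      have hb' : |b| ≤ M := abs_le.mpr ⟨hb.1, hb.2⟩
      have hab1 : (a+b)^4 ≤ 16*M^4 := by
        have h1 : (a+b)^2 ≤ (2*M)^2 :=
          sq_le_sq' (by linarith [ha.1, hb.1]) (by linarith [ha.2, hb.2])
        calc (a+b)^4 = ((a+b)^2)^2 := by ring
          _ ≤ ((2*M)^2)^2 := pow_le_pow_left₀ (sq_nonneg _) h1 2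
          _ = 16*M^4 := by ring
      have hab2 : (a-b)^4 ≤ 16*M^4 := by
        have h1 : (a-b)^2 ≤ (2*M)^2 :=
          sq_le_sq' (by linarith [ha.1, hb.2]) (by linarith [ha.2, hb.1])
        calc (a-b)^4 = ((a-b)^2)^2 := by ring
          _ ≤ ((2*M)^2)^2 := pow_le_pow_left₀ (sq_nonneg _) h1 2
          _ = 16*M^4 := by ring
      have hu4 : (h*(a+b))^4 ≤ h^4 * (16*M^4) := by
        rw [mul_pow]
        exact mul_le_mul_of_nonneg_left hab1 (by positivity)
      have hv4 : (h*(a-b))^4 ≤ h^4 * (16*M^4) := by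
        rw [mul_pow]
        exact mul_le_mul_of_nonneg_left hab2 (by positivity)
      have hEq : c*w/3 * (32*h^4*M^4) = ε := by
        linear_combination (32*h^2*M^4/3) * hcwh + (1/3) * hh2'
      calc |w * D1 - w * D2| ≤ |w * D1| + |w * D2| := abs_sub _ _
        _ = w * |D1| + w * |D2| := by
            rw [abs_mul, abs_mul, abs_of_pos hwpos]
        _ ≤ w * (c/3 * (h*(a+b))^4) + w * (c/3 * (h*(a-b))^4) := by
            apply add_le_add <;> apply mul_le_mul_of_nonneg_left _ hwpos.le
            · exact key1
            · exact key2
        _ ≤ w * (c/3 * (h^4*(16*M^4))) + w * (c/3 * (h^4*(16*M^4))) := by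
            apply add_le_add <;> apply mul_le_mul_of_nonneg_left _ hwpos.le <;>
              apply mul_le_mul_of_nonneg_left _ (by positivity)
            · exact hu4
            · exact hv4
        _ = c*w/3 * (32*h^4*M^4) := by ring
        _ = ε := hEq
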